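/- Let μ be a probability measure on ℝ, let ε ∈ (0,1), and let integers r ≥ 1 and N ≥ r. If q₁, …, q_N are drawn i.i.d. from μ, then the probability, over the multisample drawn from the product measure μ^N, of the event { μ{ q ∈ ℝ : q > rmax_r{q_i}_{i=1}^N } > ε } is at most B(r−1; N, ε). -/

import Mathlib

open MeasureTheory

/-- Binomial cumulative distribution function `B(k; N, ε)`,
with the convention that it is `0` for `k < 0`. -/
noncomputable def binomCdf (k : ℤ) (N : ℕ) (ε : ℝ) : ℝ :=
  ∑ i ∈ Finset.range (N + 1),
    if (i : ℤ) ≤ k then (N.choose i : ℝ) * ε ^ i * (1 - ε) ^ (N - i) else 0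

/-- The `r`-th largest value of the collection `{q i}_{i=1}^N`
(the element at position `r` in decreasing order, counted with multiplicity). -/
noncomputable def rmax {N : ℕ} (r : ℕ) (q : Fin N → ℝ) : ℝ :=
  ((List.ofFn q).insertionSort (· ≤ ·)).getD (N - r) 0

section aux
open Finset
open scoped Classical

lemma pi_count_mem_le (N : ℕ) (ν : Measure ℝ) [IsProbabilityMeasure ν]
    (A : Set ℝ) (hA : MeasurableSet A) (k : ℕ) :
    (Measure.pi fun _ : Fin N => ν)
      {q : Fin N → ℝ | (Finset.univ.filter fun i => q i ∈ A).card ≤ k}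
    = ∑ T ∈ (Finset.univ : Finset (Fin N)).powerset.filter (fun T => T.card ≤ k),
        ν A ^ T.card * ν Aᶜ ^ (N - T.card) := by
  have hset : {q : Fin N → ℝ | (Finset.univ.filter fun i => q i ∈ A).card ≤ k}
      = ⋃ T ∈ (Finset.univ : Finset (Fin N)).powerset.filter (fun T => T.card ≤ k),
          Set.pi Set.univ (fun i => if i ∈ T then A else Aᶜ) := by
    ext q
    simp only [Set.mem_setOf_eq, Set.mem_iUnion, Finset.mem_filter, Finset.mem_powerset,
      Set.mem_pi, Set.mem_univ, forall_true_left, exists_prop]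
    constructor
    · intro h
      refine ⟨Finset.univ.filter fun i => q i ∈ A, ⟨Finset.subset_univ _, h⟩, fun i => ?_⟩
      by_cases hqi : q i ∈ A <;> simp [hqi]
    · rintro ⟨T, ⟨-, hTk⟩, hq⟩
      have : Finset.univ.filter (fun i => q i ∈ A) = T := by
        ext i
        have h2 := hq i
        by_cases hi : i ∈ T <;> simp_all
      rw [this]; exact hTk
  rw [hset, measure_biUnion_finset]
  · refine Finset.sum_congr rfl fun T _ => ?_
    rw [Measure.pi_pi]
    have h1 : ∀ i, ν (if i ∈ T then A else Aᶜ) = if i ∈ T then ν A else ν Aᶜ := fun i => by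
      by_cases hi : i ∈ T <;> simp [hi]
    simp_rw [h1]
    rw [← Finset.prod_mul_prod_compl T]
    have h2 : ∏ i ∈ T, (if i ∈ T then ν A else ν Aᶜ) = ν A ^ T.card := by
      rw [Finset.prod_congr rfl fun i hi => if_pos hi, Finset.prod_const]
    have h3 : ∏ i ∈ Tᶜ, (if i ∈ T then ν A else ν Aᶜ) = ν Aᶜ ^ (N - T.card) := by
      rw [Finset.prod_congr rfl fun i hi => if_neg (Finset.mem_compl.mp hi), Finset.prod_const,
        Finset.card_compl, Fintype.card_fin]
    rw [h2, h3]
  · intro T hT T' hT' hne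
    simp only [Function.onFun]
    rw [Set.disjoint_left]
    intro q hq hq'
    simp only [Set.mem_pi, Set.mem_univ, forall_true_left] at hq hq'
    have : T = T' := by
      ext i
      have a := hq i
      have b := hq' i
      by_cases hi : i ∈ T <;> by_cases hi' : i ∈ T' <;> simp_all
    exact hne this
  · intro T hT
    exact MeasurableSet.pi (Set.countable_univ) fun i _ => by
      by_cases hi : i ∈ T <;> simp [hi, hA, hA.compl]

lemma sum_powerset_card_le {M : Type*} [AddCommMonoid M] (N k : ℕ) (f : ℕ → M) :
    ∑ T ∈ (Finset.univ : Finset (Fin N)).powerset.filter (fun T => T.card ≤ k), f T.card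
    = ∑ j ∈ Finset.range (k+1), (N.choose j) • f j := by
  have h : (Finset.univ : Finset (Fin N)).powerset.filter (fun T => T.card ≤ k)
      = (Finset.range (k+1)).biUnion (fun j => Finset.powersetCard j Finset.univ) := by
    ext T
    simp [Finset.mem_powersetCard, Nat.lt_succ_iff, eq_comm]
  rw [h, Finset.sum_biUnion]
  · refine Finset.sum_congr rfl fun j _ => ?_
    rw [Finset.sum_congr rfl (fun T hT => by
      rw [(Finset.mem_powersetCard.mp hT).2]), Finset.sum_const,
      Finset.card_powersetCard, Finset.card_univ, Fintype.card_fin]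
  · intro a ha b hb hab
    simp only [Function.onFun]
    rw [Finset.disjoint_left]
    intro T hTa hTb
    exact hab ((Finset.mem_powersetCard.mp hTa).2.symm.trans (Finset.mem_powersetCard.mp hTb).2)

lemma sum_map_ite_eq_countP {α : Type*} (p : α → Bool) (l : List α) :
    (l.map fun x => if p x then (1:ℕ) else 0).sum = l.countP p := by
  induction l with
  | nil => simp
  | cons a l ih =>
    by_cases h : p a <;> simp [List.countP_cons, h, ih] <;> omega

lemma card_filter_ge_le {N : ℕ} (r : ℕ) (hr : 1 ≤ r) (hrN : r ≤ N) (q : Fin N → ℝ) (t : ℝ)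
    (h : rmax r q < t) : (Finset.univ.filter fun i => t ≤ q i).card ≤ r - 1 := by
  set l := (List.ofFn q).insertionSort (· ≤ ·) with hl
  have hperm : List.Perm (List.ofFn q) l := (List.perm_insertionSort _ _).symm
  have hlen : l.length = N := by
    rw [← hperm.length_eq, List.length_ofFn]
  have hsorted : l.Pairwise (· ≤ ·) := List.pairwise_insertionSort _ _
  have hcard : (Finset.univ.filter fun i => t ≤ q i).card
      = l.countP (fun x => decide (t ≤ x)) := by
    rw [← hperm.countP_eq]
    rw [List.ofFn_eq_map, List.countP_map, Finset.card_filter, Fin.sum_univ_def,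
      ← sum_map_ite_eq_countP]
    simp
  rw [hcard, ← List.take_append_drop (N - r + 1) l, List.countP_append]
  have h1 : (l.take (N - r + 1)).countP (fun x => decide (t ≤ x)) = 0 := by
    rw [List.countP_eq_zero]
    intro x hx
    simp only [decide_eq_true_eq, not_le]
    obtain ⟨i, hi, rfl⟩ := List.mem_take_iff_getElem.mp hx
    refine lt_of_le_of_lt ?_ h
    have hNr : N - r < l.length := by omega
    have heq : rmax r q = l[N - r] := List.getD_eq_getElem l 0 hNr
    rw [heq]
    have hi' : i ≤ N - r := by omega
    exact List.Pairwise.rel_get_of_le hsorted (Fin.mk_le_mk.mpr hi')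
  have h2 : (l.drop (N - r + 1)).countP (fun x => decide (t ≤ x)) ≤ r - 1 := by
    refine le_trans List.countP_le_length ?_
    rw [List.length_drop, hlen]
    omega
  omega

end aux

theorem stmt1 (μ : Measure ℝ) [IsProbabilityMeasure μ]
    (ε : ℝ) (hε : ε ∈ Set.Ioo (0 : ℝ) 1)
    (r N : ℕ) (hr : 1 ≤ r) (hrN : r ≤ N) :
    (Measure.pi fun _ : Fin N => μ)
        {q : Fin N → ℝ | ENNReal.ofReal ε < μ {x : ℝ | rmax r q < x}} ≤
      ENNReal.ofReal (binomCdf ((r : ℤ) - 1) N ε) := by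
  classical
  obtain ⟨hε0, hε1⟩ := hε
  set S : Set ℝ := {s | μ {x | s < x} ≤ ENNReal.ofReal ε} with hS
  have hmono : ∀ {s s' : ℝ}, s ≤ s' → μ {x | s' < x} ≤ μ {x | s < x} := by
    intro s s' hss
    exact measure_mono (fun x hx => lt_of_le_of_lt hss hx)
  -- S is nonempty
  have hne : S.Nonempty := by
    have hI : (⋂ n : ℕ, {x : ℝ | (n : ℝ) < x}) = ∅ := by
      ext x
      simp only [Set.mem_iInter, Set.mem_setOf_eq, Set.mem_empty_iff_false, iff_false, not_forall,
        not_lt]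
      obtain ⟨n, hn⟩ := exists_nat_gt x
      exact ⟨n, hn.le⟩
    have htend : Filter.Tendsto (fun n : ℕ => μ {x : ℝ | (n : ℝ) < x}) Filter.atTop
        (nhds (μ (⋂ n : ℕ, {x : ℝ | (n : ℝ) < x}))) := by
      refine tendsto_measure_iInter_atTop (fun n => measurableSet_Ioi.nullMeasurableSet)
        (fun n m hnm x hx => show (n:ℝ) < x from lt_of_le_of_lt (by exact_mod_cast hnm) (show (m:ℝ) < x from hx)) ⟨0, measure_ne_top _ _⟩
    rw [hI, measure_empty] at htend
    have : ∀ᶠ n : ℕ in Filter.atTop, μ {x : ℝ | (n : ℝ) < x} < ENNReal.ofReal ε :=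
      htend.eventually_lt_const (by simpa using hε0)
    obtain ⟨n, hn⟩ := this.exists
    exact ⟨n, hn.le⟩
  -- S is bounded below
  have hbdd : BddBelow S := by
    have hU : (⋃ n : ℕ, {x : ℝ | -(n : ℝ) < x}) = Set.univ := by
      ext x
      simp only [Set.mem_iUnion, Set.mem_setOf_eq, Set.mem_univ, iff_true]
      obtain ⟨n, hn⟩ := exists_nat_gt (-x)
      exact ⟨n, by linarith⟩
    have htend : Filter.Tendsto (fun n : ℕ => μ {x : ℝ | -(n : ℝ) < x}) Filter.atTop
        (nhds (μ (⋃ n : ℕ, {x : ℝ | -(n : ℝ) < x}))) := by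
      refine tendsto_measure_iUnion_atTop (fun n m hnm x hx => show -(m:ℝ) < x from lt_of_le_of_lt ?_ (show -(n:ℝ) < x from hx))
      simp only [neg_le_neg_iff]
      exact_mod_cast hnm
    rw [hU, measure_univ] at htend
    have : ∀ᶠ n : ℕ in Filter.atTop, ENNReal.ofReal ε < μ {x : ℝ | -(n : ℝ) < x} :=
      htend.eventually_const_lt (by exact ENNReal.ofReal_lt_one.mpr hε1)
    obtain ⟨n, hn⟩ := this.exists
    refine ⟨-(n : ℝ), fun s hs => ?_⟩
    by_contra hcon
    push_neg at hcon
    exact absurd (lt_of_lt_of_le hn (le_trans (hmono hcon.le) hs)) (lt_irrefl _)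
  set t : ℝ := sInf S with htdef
  -- right tail at t is ≤ ε
  have ht1 : μ {x : ℝ | t < x} ≤ ENNReal.ofReal ε := by
    have hU : {x : ℝ | t < x} = ⋃ n : ℕ, {x : ℝ | t + 1 / ((n : ℝ) + 1) < x} := by
      ext x
      simp only [Set.mem_setOf_eq, Set.mem_iUnion]
      constructor
      · intro hx
        obtain ⟨n, hn⟩ := exists_nat_one_div_lt (sub_pos.mpr hx)
        exact ⟨n, by linarith⟩
      · rintro ⟨n, hn⟩
        have : 0 < 1 / ((n : ℝ) + 1) := by positivity
        linarith
    rw [hU]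
    rw [Directed.measure_iUnion]
    · refine iSup_le fun n => ?_
      have hlt : t < t + 1 / ((n : ℝ) + 1) := by
        have : 0 < 1 / ((n : ℝ) + 1) := by positivity
        linarith
      obtain ⟨s, hsS, hs⟩ := (csInf_lt_iff hbdd hne).mp hlt
      exact le_trans (hmono hs.le) hsS
    · have hm : Monotone (fun n : ℕ => {x : ℝ | t + 1 / ((n : ℝ) + 1) < x}) := by
        intro n m hnm x hx
        simp only [Set.mem_setOf_eq] at hx ⊢
        have h1 : 1 / ((m : ℝ) + 1) ≤ 1 / ((n : ℝ) + 1) := by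
          apply one_div_le_one_div_of_le (by positivity)
          have : (n:ℝ) ≤ m := by exact_mod_cast hnm
          linarith
        linarith
      exact hm.directed_le
  -- closed right tail at t is ≥ ε
  have ht2 : ENNReal.ofReal ε ≤ μ {x : ℝ | t ≤ x} := by
    have hI : {x : ℝ | t ≤ x} = ⋂ n : ℕ, {x : ℝ | t - 1 / ((n : ℝ) + 1) < x} := by
      ext x
      simp only [Set.mem_setOf_eq, Set.mem_iInter]
      constructor
      · intro hx n
        have : 0 < 1 / ((n : ℝ) + 1) := by positivity
        linarith
      · intro hx
        by_contra hcon
        push_neg at hcon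
        obtain ⟨n, hn⟩ := exists_nat_one_div_lt (sub_pos.mpr hcon)
        have := hx n
        linarith
    have htend : Filter.Tendsto (fun n : ℕ => μ {x : ℝ | t - 1 / ((n : ℝ) + 1) < x})
        Filter.atTop (nhds (μ (⋂ n : ℕ, {x : ℝ | t - 1 / ((n : ℝ) + 1) < x}))) := by
      refine tendsto_measure_iInter_atTop (fun n => measurableSet_Ioi.nullMeasurableSet)
        (fun n m hnm x hx => ?_) ⟨0, measure_ne_top _ _⟩
      simp only [Set.mem_setOf_eq] at hx ⊢
      have h1 : 1 / ((m : ℝ) + 1) ≤ 1 / ((n : ℝ) + 1) := by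
        apply one_div_le_one_div_of_le (by positivity)
        have : (n:ℝ) ≤ m := by exact_mod_cast hnm
        linarith
      linarith
    rw [hI]
    refine ge_of_tendsto htend (Filter.Eventually.of_forall fun n => ?_)
    have hns : t - 1 / ((n : ℝ) + 1) ∉ S := by
      intro hmem
      have := csInf_le hbdd hmem
      have hpos : 0 < 1 / ((n : ℝ) + 1) := by positivity
      rw [← htdef] at this
      linarith
    exact (not_le.mp hns).le
  -- the event is contained in the counting event
  have hsub : {q : Fin N → ℝ | ENNReal.ofReal ε < μ {x : ℝ | rmax r q < x}}
      ⊆ {q : Fin N → ℝ | (Finset.univ.filter fun i => q i ∈ {x : ℝ | t ≤ x}).card ≤ r - 1} := by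
    intro q hq
    simp only [Set.mem_setOf_eq] at hq ⊢
    have hlt : rmax r q < t := by
      by_contra hcon
      push_neg at hcon
      exact absurd (lt_of_lt_of_le hq (le_trans (hmono hcon) ht1)) (lt_irrefl _)
    have := card_filter_ge_le r hr hrN q t hlt
    convert this using 2
  -- main chain
  set A : Set ℝ := {x : ℝ | t ≤ x} with hA
  have hAm : MeasurableSet A := measurableSet_Ici
  set k := r - 1 with hk
  refine le_trans (measure_mono hsub) ?_
  rw [pi_count_mem_le N μ A hAm k]
  set ν : Measure ℝ := volume.restrict (Set.Icc (0:ℝ) 1) with hν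
  haveI : IsProbabilityMeasure ν := ⟨by rw [Measure.restrict_apply_univ, Real.volume_Icc]; norm_num⟩
  have hIic : ∀ c : ℝ, 0 ≤ c → c ≤ 1 → ν (Set.Iic c) = ENNReal.ofReal c := by
    intro c h0 h1
    rw [hν, Measure.restrict_apply measurableSet_Iic]
    have hinter : Set.Iic c ∩ Set.Icc 0 1 = Set.Icc 0 c := by
      ext x
      simp only [Set.mem_inter_iff, Set.mem_Iic, Set.mem_Icc]
      constructor
      · rintro ⟨h, h2, h3⟩; exact ⟨h2, h⟩
      · rintro ⟨h2, h⟩; exact ⟨h, h2, le_trans h h1⟩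
    rw [hinter, Real.volume_Icc, sub_zero]
  set c : ℝ := (μ A).toReal with hc
  have hμA : ENNReal.ofReal c = μ A := ENNReal.ofReal_toReal (measure_ne_top μ A)
  have hc0 : 0 ≤ c := ENNReal.toReal_nonneg
  have hc1 : c ≤ 1 := by
    have h1 := prob_le_one (μ := μ) (s := A)
    calc c = (μ A).toReal := hc
    _ ≤ (1 : ENNReal).toReal := ENNReal.toReal_mono (by simp) h1
    _ = 1 := by simp
  have hεc : ε ≤ c := by
    have h1 : ENNReal.ofReal ε ≤ ENNReal.ofReal c := by rw [hμA]; exact ht2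
    exact (ENNReal.ofReal_le_ofReal_iff hc0).mp h1
  have hν1 : ν (Set.Iic c) = μ A := by rw [hIic c hc0 hc1, hμA]
  have hν1c : ν (Set.Iic c)ᶜ = μ Aᶜ := by
    rw [measure_compl measurableSet_Iic (measure_ne_top _ _),
      measure_compl hAm (measure_ne_top _ _), measure_univ, measure_univ, hν1]
  have step1 : ∑ T ∈ (Finset.univ : Finset (Fin N)).powerset.filter (fun T => T.card ≤ k),
        μ A ^ T.card * μ Aᶜ ^ (N - T.card)
      = (Measure.pi fun _ : Fin N => ν)
          {q : Fin N → ℝ | (Finset.univ.filter fun i => q i ∈ Set.Iic c).card ≤ k} := by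
    rw [← hν1, ← hν1c]
    convert (pi_count_mem_le N ν (Set.Iic c) measurableSet_Iic k).symm
  rw [step1]
  have hsub2 : {q : Fin N → ℝ | (Finset.univ.filter fun i => q i ∈ Set.Iic c).card ≤ k}
      ⊆ {q : Fin N → ℝ | (Finset.univ.filter fun i => q i ∈ Set.Iic ε).card ≤ k} := by
    intro q hq
    simp only [Set.mem_setOf_eq] at hq ⊢
    refine le_trans (Finset.card_le_card (Finset.monotone_filter_right _ ?_)) hq
    intro i _ hi
    exact le_trans hi hεc
  refine le_trans (measure_mono hsub2) ?_
  rw [show (Measure.pi fun _ : Fin N => ν) {q : Fin N → ℝ | (Finset.univ.filter fun i => q i ∈ Set.Iic ε).card ≤ k} = ∑ T ∈ (Finset.univ : Finset (Fin N)).powerset.filter (fun T => T.card ≤ k), ν (Set.Iic ε) ^ T.card * ν (Set.Iic ε)ᶜ ^ (N - T.card) from by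
    convert pi_count_mem_le N ν (Set.Iic ε) measurableSet_Iic k]
  have hνε : ν (Set.Iic ε) = ENNReal.ofReal ε := hIic ε hε0.le hε1.le
  have hνεc : ν (Set.Iic ε)ᶜ = ENNReal.ofReal (1 - ε) := by
    rw [measure_compl measurableSet_Iic (measure_ne_top _ _), measure_univ, hνε,
      ENNReal.ofReal_sub _ hε0.le, ENNReal.ofReal_one]
  rw [hνε, hνεc, sum_powerset_card_le N k
    (fun j => ENNReal.ofReal ε ^ j * ENNReal.ofReal (1 - ε) ^ (N - j))]
  have hkr : k + 1 = r := by omega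
  rw [hkr]
  have hbc : binomCdf ((r : ℤ) - 1) N ε
      = ∑ i ∈ Finset.range r, (N.choose i : ℝ) * ε ^ i * (1 - ε) ^ (N - i) := by
    rw [binomCdf, ← Finset.sum_filter]
    congr 1
    ext i
    simp only [Finset.mem_filter, Finset.mem_range]
    omega
  rw [hbc, ENNReal.ofReal_sum_of_nonneg]
  · refine le_of_eq (Finset.sum_congr rfl fun i _ => ?_)
    rw [ENNReal.ofReal_mul (by positivity), ENNReal.ofReal_mul (by positivity),
      ENNReal.ofReal_pow hε0.le, ENNReal.ofReal_pow (by linarith), ENNReal.ofReal_natCast,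
      nsmul_eq_mul, mul_assoc]
  · intro i _
    have h1ε : (0:ℝ) ≤ 1 - ε := by linarith
    positivity
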